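/- Let (V_n)_{n∈ℕ} be a family of contractions on a Hilbert space H such that the row operator V = [V_1 V_2 …] : ⊕_n H → H is a partial isometry (equivalently, ∑_n V_n V_n* is an orthogonal projection). Let M ⊆ H be a closed subspace that is coinvariant for every V_n (i.e., V_n* M ⊆ M) and such that M^⊥ ⊆ ran V. Then the compression P_M V P_M, i.e., the row operator [P_M V_1|_M, P_M V_2|_M, …] : ⊕_n M → M, is a partial isometry. -/

import Mathlib

open ContinuousLinearMap

/-- the compression of a partially isometric row of contractions to a
coinvariant subspace whose orthogonal complement lies in the range of the row is again
a partial isometry (its row "defect" `∑ W_n W_n*` is an orthogonal projection). -/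
theorem stmt5 {H : Type*} [NormedAddCommGroup H] [InnerProductSpace ℂ H] [CompleteSpace H]
    (V : ℕ → H →L[ℂ] H) (hV : ∀ n, ‖V n‖ ≤ 1)
    -- `E = ∑_n V_n V_n*` is an orthogonal projection (i.e. the row `V` is a partial isometry)
    (E : H →L[ℂ] H) (hEsa : adjoint E = E) (hEidem : E * E = E)
    (hsum : ∀ x : H, HasSum (fun n => V n (adjoint (V n) x)) (E x))
    -- `M` is a closed subspace, coinvariant for every `V_n`
    (M : Submodule ℂ H) (hMclosed : IsClosed (M : Set H))
    (hcoinv : ∀ n, ∀ x ∈ M, adjoint (V n) x ∈ M)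
    -- `M^⊥ ⊆ ran V` (the range of the row equals the range of the projection `E`)
    (hperp : ∀ x ∈ Mᗮ, ∃ y, E y = x)
    -- `P` is the orthogonal projection of `H` onto `M`
    (P : H →L[ℂ] H) (hP : ∀ x : H, P x ∈ M ∧ x - P x ∈ Mᗮ) :
    ∃ F : H →L[ℂ] H, adjoint F = F ∧ F * F = F ∧
      ∀ x : H, HasSum (fun n => P (V n (P (adjoint (V n) (P x))))) (F x) := by
  -- P fixes M
  have hPfix : ∀ m ∈ M, P m = m := by
    intro m hm
    have h1 : m - P m ∈ M := M.sub_mem hm (hP m).1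
    have h2 : m - P m ∈ Mᗮ := (hP m).2
    have h0 : m - P m = 0 := by
      have := Submodule.inner_right_of_mem_orthogonal (𝕜 := ℂ) h1 h2
      simpa [inner_self_eq_zero] using this
    exact (sub_eq_zero.mp h0).symm
  -- P is self-adjoint
  have hPadj : adjoint P = P := by
    symm
    rw [eq_adjoint_iff]
    intro x y
    have hx : (inner ℂ (P x) (y - P y) : ℂ) = 0 :=
      Submodule.inner_right_of_mem_orthogonal (hP x).1 (hP y).2
    have hy : (inner ℂ (x - P x) (P y) : ℂ) = 0 :=
      Submodule.inner_left_of_mem_orthogonal (hP y).1 (hP x).2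
    have h1 : (inner ℂ (P x) y : ℂ) = inner ℂ (P x) (P y) :=
      sub_eq_zero.mp (by rw [← inner_sub_right]; exact hx)
    have h2 : (inner ℂ x (P y) : ℂ) = inner ℂ (P x) (P y) :=
      sub_eq_zero.mp (by rw [← inner_sub_left]; exact hy)
    rw [h1, h2]
  -- E fixes Mᗮ
  have hEfix : ∀ x, E (x - P x) = x - P x := by
    intro x
    obtain ⟨y, hy⟩ := hperp (x - P x) (hP x).2
    calc E (x - P x) = E (E y) := by rw [hy]
    _ = (E * E) y := rfl
    _ = E y := by rw [hEidem]
    _ = x - P x := hy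
  -- hence P E P = P E pointwise
  have hPEP : ∀ w, P (E (P w)) = P (E w) := by
    intro w
    have h1 : E (P w) = E w - (w - P w) := by
      have h := hEfix w
      rw [map_sub] at h
      rw [← h]; abel
    rw [h1, map_sub, map_sub, hPfix (P w) (hP w).1]
    simp
  refine ⟨P ∘L E ∘L P, ?_, ?_, ?_⟩
  · rw [adjoint_comp, adjoint_comp, hPadj, hEsa]
    ext x; rfl
  · ext x
    have hPidem : ∀ z, P (P z) = P z := fun z => hPfix (P z) (hP z).1
    have hEE : E (E (P x)) = E (P x) := by
      have := congrArg (fun T : H →L[ℂ] H => T (P x)) hEidem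
      simpa using this
    show P (E (P (P (E (P x))))) = P (E (P x))
    rw [hPidem (E (P x)), hPEP (E (P x)), hEE]
  · intro x
    have key : ∀ n, P (V n (P (adjoint (V n) (P x)))) = P (V n (adjoint (V n) (P x))) := by
      intro n
      rw [hPfix (adjoint (V n) (P x)) (hcoinv n (P x) (hP x).1)]
    have h := (hsum (P x)).mapL P
    simp only [comp_apply, key]
    exact h
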